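/- Let λ, λ̂ be partitions of n and μ, μ̂ partitions of n−1 such that λ̂ is obtained from λ by moving a box from row i to row î with î > i, μ̂ is obtained from μ by the same move, and λ is obtained from μ by adding a box in position (r,c) with r < i (likewise λ̂ from μ̂ by adding the same box (r,c)). Then for any N ≥ ℓ(λ̂), s_λ(1^N)·s_{μ̂}(1^N) ≥ s_{λ̂}(1^N)·s_μ(1^N). -/

import Mathlib

open scoped BigOperators

def isPartition (f : ℕ → ℕ) : Prop :=
  (∀ ⦃a b : ℕ⦄, a ≤ b → f b ≤ f a) ∧ ∃ N, ∀ a, N ≤ a → f a = 0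

noncomputable def psize (f : ℕ → ℕ) : ℕ := ∑ᶠ a, f a

def addBox (mu lam : ℕ → ℕ) : Prop := ∃ r, lam = Function.update mu r (mu r + 1)

noncomputable def dimY (lam : ℕ → ℕ) : ℕ :=
  Set.ncard { p : ℕ → ℕ → ℕ |
    p 0 = (fun _ => 0) ∧ (∀ k, isPartition (p k)) ∧
    (∀ k, k < psize lam → addBox (p k) (p (k + 1))) ∧
    (∀ k, psize lam ≤ k → p k = lam) }

def dominates (lam mu : ℕ → ℕ) : Prop :=
  ∀ k, ∑ a ∈ Finset.range k, mu a ≤ ∑ a ∈ Finset.range k, lam a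

def moveBox (lam hatlam : ℕ → ℕ) (i hi : ℕ) : Prop :=
  lam i = hatlam i + 1 ∧ hatlam hi = lam hi + 1 ∧
  ∀ a, a ≠ i → a ≠ hi → lam a = hatlam a

noncomputable def schurOnes (N : ℕ) (lam : ℕ → ℕ) : ℕ :=
  Set.ncard { T : ℕ → ℕ → ℕ |
    (∀ i j, j < lam i → 1 ≤ T i j ∧ T i j ≤ N) ∧
    (∀ i j, j + 1 < lam i → T i j ≤ T i (j + 1)) ∧
    (∀ i j, j < lam (i + 1) → T i j < T (i + 1) j) ∧
    (∀ i j, lam i ≤ j → T i j = 0) }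

noncomputable def projStep (rho : (ℕ → ℕ) → ℝ) : (ℕ → ℕ) → ℝ :=
  fun mu => ∑ᶠ l ∈ { l : ℕ → ℕ | addBox mu l }, ((dimY mu : ℝ) / (dimY l : ℝ)) * rho l

def isMeasureOn (m : ℕ) (rho : (ℕ → ℕ) → ℝ) : Prop :=
  (∀ f, 0 ≤ rho f) ∧ ∀ f, rho f ≠ 0 → isPartition f ∧ psize f = m

def stochDom (m : ℕ) (rho rho' : (ℕ → ℕ) → ℝ) : Prop :=
  ∀ U : Set (ℕ → ℕ),
    (∀ a ∈ U, ∀ b, isPartition b → psize b = m → dominates b a → b ∈ U) →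
    ∑ᶠ f ∈ U, rho' f ≤ ∑ᶠ f ∈ U, rho f

namespace SchurAux
open Finset Matrix Polynomial



def Spairs (n : ℕ) : Finset (ℕ × ℕ) := (range n ×ˢ range n).filter (fun p => p.1 < p.2)

lemma mem_Spairs {n : ℕ} {p : ℕ × ℕ} : p ∈ Spairs n ↔ p.1 < p.2 ∧ p.2 < n := by
  simp only [Spairs, mem_filter, mem_product, mem_range]
  constructor
  · rintro ⟨⟨_, h2⟩, h⟩; exact ⟨h, h2⟩
  · rintro ⟨h, h2⟩; exact ⟨⟨lt_trans h h2, h2⟩, h⟩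

noncomputable def ff (k : ℕ) (x : ℚ) : ℚ := ∏ j ∈ range k, (x - j)

lemma ff_zero (x : ℚ) : ff 0 x = 1 := by simp [ff]

lemma ff_succ (k : ℕ) (x : ℚ) : ff (k+1) x = ff k x * (x - k) := by
  simp [ff, prod_range_succ]

lemma ff_succ' (k : ℕ) (x : ℚ) : ff (k+1) (x+1) = (x+1) * ff k x := by
  rw [ff, prod_range_succ']
  simp only [Nat.cast_zero, sub_zero, ff]
  rw [mul_comm]
  congr 1
  apply prod_congr rfl
  intro j _
  push_cast
  ring

lemma ff_step (k : ℕ) (x : ℚ) : ff (k+1) (x+1) - ff (k+1) x = ((k:ℚ)+1) * ff k x := by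
  rw [ff_succ', ff_succ]; ring

lemma hockey (k : ℕ) (s t : ℤ) (h : s ≤ t) :
    ((k:ℚ)+1) * ∑ x ∈ Finset.Ico s t, ff k (x:ℚ) = ff (k+1) (t:ℚ) - ff (k+1) (s:ℚ) := by
  refine Int.le_induction (motive := fun t _ => ((k:ℚ)+1) * ∑ x ∈ Finset.Ico s t, ff k (x:ℚ) = ff (k+1) (t:ℚ) - ff (k+1) (s:ℚ)) ?_ ?_ t h
  · simp [Finset.Ico_self]
  · intro t ht ih
    have hins : Finset.Ico s (t+1) = insert t (Finset.Ico s t) := by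
      ext x; simp only [Finset.mem_insert, Finset.mem_Ico]; omega
    rw [hins, Finset.sum_insert (by simp), mul_add, ih]
    have h2 := ff_step k (t:ℚ)
    push_cast
    push_cast at h2
    linarith

lemma ff_eval (k : ℕ) (x : ℚ) : (descPochhammer ℚ k).eval x = ff k x := by
  induction k with
  | zero => simp [descPochhammer_zero, ff_zero]
  | succ k ih => rw [descPochhammer_succ_right, ff_succ, eval_mul]; simp [ih]

lemma det_ff {n : ℕ} (v : Fin n → ℚ) :
    (Matrix.of fun a k : Fin n => ff k (v a)).det = ∏ a : Fin n, ∏ b ∈ Ioi a, (v b - v a) := by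
  rw [← det_vandermonde]
  rw [Matrix.det_eval_matrixOfPolynomials_eq_det_vandermonde v
    (fun k : Fin n => descPochhammer ℚ k)
    (fun k => descPochhammer_natDegree (R := ℚ) k) (fun k => monic_descPochhammer ℚ k)]
  congr 1
  ext a k
  simp [ff_eval]




lemma prod_fin_factorial (N : ℕ) : (∏ k : Fin N, ((k:ℚ)+1)) = (N.factorial : ℚ) := by
  induction N with
  | zero => simp
  | succ N ih =>
    rw [Fin.prod_univ_castSucc]
    simp only [Fin.coe_castSucc, Fin.val_last]
    rw [ih, Nat.factorial_succ]; push_cast; ring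

lemma det_sum_rows {N : ℕ} (A : Fin N → Finset ℤ) (g : ℤ → Fin N → ℚ) :
    (Matrix.of fun a k => ∑ x ∈ A a, g x k).det
      = ∑ m ∈ Fintype.piFinset A, (Matrix.of fun a k => g (m a) k).det := by
  classical
  have h := (Matrix.detRowAlternating (R := ℚ) (n := Fin N)).toMultilinearMap.map_sum_finset
    (g := fun (_ : Fin N) (x : ℤ) => g x) (A := A)
  have h1 : (fun a : Fin N => ∑ x ∈ A a, g x) = (Matrix.of fun a k => ∑ x ∈ A a, g x k) := by
    funext a; rw [Finset.sum_fn]; rfl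
  rw [h1] at h
  exact h






lemma key_rat (N : ℕ) (l : ℕ → ℤ) (hl : ∀ a, a < N → l (a+1) ≤ l a) :
    (N.factorial : ℚ) *
      ∑ m ∈ Fintype.piFinset (fun a : Fin N => Finset.Ico (l ((a:ℕ)+1)) (l (a:ℕ))),
        ∏ a : Fin N, ∏ b ∈ Ioi a, (((m b : ℤ):ℚ) - ((m a : ℤ):ℚ))
      = (-1:ℚ)^N * ∏ a : Fin (N+1), ∏ b ∈ Ioi a, (((l (b:ℕ) : ℤ):ℚ) - ((l (a:ℕ):ℤ):ℚ)) := by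
  classical
  set v : Fin (N+1) → ℚ := fun a => ((l (a:ℕ) : ℤ) : ℚ) with hv
  set B : Matrix (Fin (N+1)) (Fin (N+1)) ℚ := Matrix.of (fun a k => ff (k:ℕ) (v a)) with hB
  set U : Matrix (Fin (N+1)) (Fin (N+1)) ℚ :=
    Matrix.of (fun a c => (if c = a then (1:ℚ) else 0) + (if (c:ℕ) = (a:ℕ)+1 then (-1:ℚ) else 0))
    with hU
  set B' : Matrix (Fin (N+1)) (Fin (N+1)) ℚ :=
    Matrix.of (fun a k => if (a:ℕ) < N then ff (k:ℕ) (v a) - ff (k:ℕ) ((l ((a:ℕ)+1) : ℤ):ℚ)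
      else ff (k:ℕ) (v a)) with hB'
  have hUB : U * B = B' := by
    ext a k
    rw [Matrix.mul_apply]
    have hterm : ∀ c : Fin (N+1), U a c * B c k
        = (if c = a then B c k else 0) + (if (c:ℕ) = (a:ℕ)+1 then -(B c k) else 0) := by
      intro c
      simp only [hU, Matrix.of_apply]
      split_ifs <;> ring
    rw [Finset.sum_congr rfl (fun c _ => hterm c), Finset.sum_add_distrib,
      Finset.sum_ite_eq' Finset.univ a (fun c => B c k)]
    simp only [Finset.mem_univ, if_true]
    by_cases ha : (a:ℕ) < N
    · have hc : ∀ c : Fin (N+1), ((c:ℕ) = (a:ℕ)+1) ↔ (c = ⟨(a:ℕ)+1, by omega⟩) := by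
        intro c
        constructor
        · intro h; exact Fin.ext h
        · intro h; rw [h]
      rw [Finset.sum_congr rfl (fun c _ => if_congr (hc c) rfl rfl),
        Finset.sum_ite_eq' Finset.univ (⟨(a:ℕ)+1, by omega⟩ : Fin (N+1)) (fun c => -(B c k))]
      simp only [Finset.mem_univ, if_true, hB', hB, Matrix.of_apply, if_pos ha, hv]
      ring_nf
    · have ha' : (a:ℕ) = N := by omega
      have hzero : ∀ c : Fin (N+1), (if (c:ℕ) = (a:ℕ)+1 then -(B c k) else 0) = 0 := by
        intro c
        rw [if_neg]
        omega
      rw [Finset.sum_congr rfl (fun c _ => hzero c), Finset.sum_const_zero]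
      simp only [hB', Matrix.of_apply, if_neg ha, add_zero, hB]
  have hdetU : U.det = 1 := by
    have htri : U.BlockTriangular id := by
      intro p q hpq
      simp only [hU, Matrix.of_apply]
      simp only [id_eq] at hpq
      have h2 : (q:ℕ) < (p:ℕ) := hpq
      rw [if_neg (Fin.ne_of_lt hpq), if_neg (by omega)]
      ring
    rw [Matrix.det_of_upperTriangular htri]
    apply Finset.prod_eq_one
    intro a _
    simp only [hU, Matrix.of_apply]
    rw [if_neg (by omega : ¬((a:ℕ) = (a:ℕ)+1))]
    simp
  have hdetBB' : B.det = B'.det := by rw [← hUB, Matrix.det_mul, hdetU, one_mul]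
  set M₁ : Matrix (Fin N) (Fin N) ℚ :=
    Matrix.of (fun a k => ∑ x ∈ Finset.Ico (l ((a:ℕ)+1)) (l (a:ℕ)), ff (k:ℕ) (x:ℚ)) with hM₁
  have hminor : B'.submatrix (Fin.last N).succAbove Fin.succ
      = Matrix.of (fun a k : Fin N => ((k:ℚ)+1) * M₁ a k) := by
    ext a k
    rw [Matrix.submatrix_apply, Fin.succAbove_last_apply]
    have hcast : ((a.castSucc : ℕ)) = (a:ℕ) := rfl
    simp only [hB', Matrix.of_apply, hcast, if_pos a.isLt, Fin.val_succ, hv, hM₁]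
    rw [← hockey (k:ℕ) _ _ (hl (a:ℕ) a.isLt)]
  have hLap := Matrix.det_succ_column_zero B'
  rw [Finset.sum_eq_single (Fin.last N)] at hLap
  · have hlast0 : B' (Fin.last N) 0 = 1 := by
      simp only [hB', Matrix.of_apply, Fin.val_last, if_neg (lt_irrefl N), Fin.val_zero]
      exact ff_zero _
    rw [hlast0, hminor] at hLap
    have hscale : Matrix.of (fun a k : Fin N => ((k:ℚ)+1) * M₁ a k)
        = M₁ * Matrix.diagonal (fun k : Fin N => ((k:ℚ)+1)) := by
      ext a k
      rw [Matrix.mul_diagonal]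
      simp only [Matrix.of_apply]
      ring
    rw [hscale, Matrix.det_mul, Matrix.det_diagonal, prod_fin_factorial] at hLap
    have hsumdet : M₁.det
        = ∑ m ∈ Fintype.piFinset (fun a : Fin N => Finset.Ico (l ((a:ℕ)+1)) (l (a:ℕ))),
          ∏ a : Fin N, ∏ b ∈ Ioi a, (((m b : ℤ):ℚ) - ((m a : ℤ):ℚ)) := by
      rw [hM₁]
      rw [det_sum_rows (fun a : Fin N => Finset.Ico (l ((a:ℕ)+1)) (l (a:ℕ)))
        (fun x k => ff (k:ℕ) (x:ℚ))]
      apply Finset.sum_congr rfl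
      intro m _
      exact det_ff (fun a => ((m a : ℤ):ℚ))
    have hdetB : B.det = ∏ a : Fin (N+1), ∏ b ∈ Ioi a, (v b - v a) := det_ff v
    rw [hsumdet.symm]
    rw [show (∏ a : Fin (N+1), ∏ b ∈ Ioi a, (((l (b:ℕ) : ℤ):ℚ) - ((l (a:ℕ):ℤ):ℚ)))
      = B.det from hdetB.symm]
    rw [hdetBB', hLap, Fin.val_last]
    have hpow : (-1:ℚ)^N * (-1:ℚ)^N = 1 := by
      rw [← pow_add]; exact Even.neg_one_pow ⟨N, rfl⟩
    calc (N.factorial:ℚ) * M₁.det = ((-1:ℚ)^N * (-1)^N) * (M₁.det * N.factorial) := by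
          rw [hpow]; ring
    _ = (-1:ℚ)^N * ((-1) ^ N * 1 * (M₁.det * ↑N.factorial)) := by ring
  · intro i _ hi
    have hiN : (i:ℕ) < N := by
      have := i.isLt
      have : (i:ℕ) ≠ N := fun h => hi (Fin.ext (by simp [h]))
      omega
    have : B' i 0 = 0 := by
      simp only [hB', Matrix.of_apply, if_pos hiN, Fin.val_zero, ff_zero]
      ring
    rw [this]
    ring
  · intro h
    exact absurd (Finset.mem_univ _) h




lemma prod_pairs {M : Type*} [CommMonoid M] (n : ℕ) (f : ℕ → ℕ → M) :
    ∏ p ∈ Spairs n, f p.1 p.2 = ∏ a : Fin n, ∏ b ∈ Ioi a, f (a:ℕ) (b:ℕ) := by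
  rw [Spairs, prod_filter, Finset.prod_product]
  rw [← Fin.prod_univ_eq_prod_range (fun a => ∏ b ∈ range n, if a < b then f a b else 1)]
  apply Finset.prod_congr rfl
  intro a _
  rw [← Fin.prod_univ_eq_prod_range (fun b => if (a:ℕ) < b then f a b else 1)]
  have hIoi : Finset.Ioi a = Finset.univ.filter (fun b => a < b) := by
    ext b; simp
  rw [hIoi, prod_filter]
  apply Finset.prod_congr rfl
  intro b _
  congr 1

lemma card_Spairs_succ (n : ℕ) : (Spairs (n+1)).card = (Spairs n).card + n := by
  have hsplit : Spairs (n+1) = Spairs n ∪ (range n).image (fun a => (a, n)) := by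
    ext p
    simp only [mem_Spairs, Finset.mem_union, Finset.mem_image, mem_range]
    constructor
    · rintro ⟨h1, h2⟩
      by_cases h : p.2 < n
      · exact Or.inl ⟨h1, h⟩
      · right
        refine ⟨p.1, by omega, ?_⟩
        have : p.2 = n := by omega
        rw [← this]
    · rintro (⟨h1, h2⟩ | ⟨a, ha, rfl⟩)
      · exact ⟨h1, by omega⟩
      · exact ⟨ha, by omega⟩
  rw [hsplit, Finset.card_union_of_disjoint, Finset.card_image_of_injective _
    (fun a b h => by simpa using (Prod.mk.injEq _ _ _ _).mp h |>.1), Finset.card_range]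
  rw [Finset.disjoint_left]
  rintro p hp hq
  rw [mem_Spairs] at hp
  rcases Finset.mem_image.mp hq with ⟨a, _, rfl⟩
  exact absurd hp.2 (lt_irrefl n)

lemma prod_flip (n : ℕ) (F : ℕ × ℕ → ℚ) :
    ∏ p ∈ Spairs n, F p = (-1:ℚ)^(Spairs n).card * ∏ p ∈ Spairs n, (- F p) := by
  have h : ∏ p ∈ Spairs n, (-F p) = ∏ p ∈ Spairs n, ((-1) * F p) :=
    Finset.prod_congr rfl (fun p _ => (neg_one_mul (F p)).symm)
  rw [h, Finset.prod_mul_distrib, Finset.prod_const, ← mul_assoc, ← pow_add,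
    Even.neg_one_pow ⟨(Spairs n).card, rfl⟩, one_mul]

lemma key_int (N : ℕ) (l : ℕ → ℤ) (hl : ∀ a, a < N → l (a+1) ≤ l a) :
    (N.factorial : ℤ) *
      ∑ m ∈ Fintype.piFinset (fun a : Fin N => Finset.Ico (l ((a:ℕ)+1)) (l (a:ℕ))),
        ∏ a : Fin N, ∏ b ∈ Ioi a, (m a - m b)
      = ∏ p ∈ Spairs (N+1), (l p.1 - l p.2) := by
  have hinj : Function.Injective ((↑) : ℤ → ℚ) := Int.cast_injective
  apply hinj
  push_cast
  set c := (Spairs N).card with hc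
  have hterm : ∀ m : Fin N → ℤ,
      (∏ a : Fin N, ∏ b ∈ Ioi a, ((m a : ℚ) - (m b : ℚ)))
      = (-1:ℚ)^c * ∏ a : Fin N, ∏ b ∈ Ioi a, ((m b : ℚ) - (m a : ℚ)) := by
    intro m
    classical
    set mf : ℕ → ℚ := fun a => if h : a < N then ((m ⟨a, h⟩ : ℤ) : ℚ) else 0 with hmf
    have h1 : (∏ a : Fin N, ∏ b ∈ Ioi a, ((m a : ℚ) - (m b : ℚ)))
        = ∏ a : Fin N, ∏ b ∈ Ioi a, (mf (a:ℕ) - mf (b:ℕ)) := by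
      apply Finset.prod_congr rfl; intro a _; apply Finset.prod_congr rfl; intro b _
      simp only [hmf, dif_pos a.isLt, dif_pos b.isLt]
    have h2 : (∏ a : Fin N, ∏ b ∈ Ioi a, ((m b : ℚ) - (m a : ℚ)))
        = ∏ a : Fin N, ∏ b ∈ Ioi a, (mf (b:ℕ) - mf (a:ℕ)) := by
      apply Finset.prod_congr rfl; intro a _; apply Finset.prod_congr rfl; intro b _
      simp only [hmf, dif_pos a.isLt, dif_pos b.isLt]
    rw [h1, h2, ← prod_pairs N (fun a b => mf a - mf b),
      ← prod_pairs N (fun a b => mf b - mf a)]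
    rw [prod_flip N (fun p => mf p.1 - mf p.2)]
    congr 1
    apply Finset.prod_congr rfl
    intro p _
    ring
  rw [Finset.sum_congr rfl (fun m _ => hterm m), ← Finset.mul_sum, ← mul_assoc,
    mul_comm ((N.factorial : ℚ)) ((-1:ℚ)^c), mul_assoc, key_rat N l hl]
  rw [← prod_pairs (N+1) (fun a b => ((l b : ℤ):ℚ) - ((l a : ℤ):ℚ)),
    prod_flip (N+1) (fun p => (l p.2 : ℚ) - (l p.1 : ℚ))]
  rw [card_Spairs_succ]
  have : ∀ p : ℕ × ℕ, -((l p.2 : ℚ) - (l p.1 : ℚ)) = ((l p.1 : ℚ) - (l p.2 : ℚ)) := by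
    intro p; ring
  rw [Finset.prod_congr rfl (fun p _ => this p)]
  rw [← mul_assoc, ← mul_assoc, ← pow_add, ← pow_add, ← hc]
  rw [show c + N + (c + N) = 2*(c+N) by ring, pow_mul]
  norm_num


def SSet (N : ℕ) (lam : ℕ → ℕ) : Set (ℕ → ℕ → ℕ) :=
  { T : ℕ → ℕ → ℕ |
    (∀ i j, j < lam i → 1 ≤ T i j ∧ T i j ≤ N) ∧
    (∀ i j, j + 1 < lam i → T i j ≤ T i (j + 1)) ∧
    (∀ i j, j < lam (i + 1) → T i j < T (i + 1) j) ∧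
    (∀ i j, lam i ≤ j → T i j = 0) }

lemma row_mono {N lam} {T : ℕ → ℕ → ℕ} (hT : T ∈ SSet N lam) {a : ℕ} :
    ∀ {j k : ℕ}, j ≤ k → k < lam a → T a j ≤ T a k := by
  suffices h : ∀ k j, j ≤ k → k < lam a → T a j ≤ T a k by
    intro j k h1 h2; exact h k j h1 h2
  intro k
  induction k with
  | zero =>
    intro j h1 _
    have hj0 : j = 0 := by omega
    rw [hj0]
  | succ k ih =>
    intro j h1 h2
    rcases Nat.eq_or_lt_of_le h1 with h | h
    · rw [h]
    · exact le_trans (ih j (by omega) (by omega)) (hT.2.1 a k h2)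

lemma entries_ge {N lam} {T : ℕ → ℕ → ℕ} (hT : T ∈ SSet N lam)
    (hmono : ∀ ⦃a b : ℕ⦄, a ≤ b → lam b ≤ lam a) :
    ∀ a j, j < lam a → a + 1 ≤ T a j := by
  intro a
  induction a with
  | zero => intro j hj; exact (hT.1 0 j hj).1
  | succ a ih =>
    intro j hj
    have h1 : j < lam a := lt_of_lt_of_le hj (hmono (Nat.le_succ a))
    exact lt_of_le_of_lt (ih j h1) (hT.2.2.1 a j hj)

lemma val_le {N lam} {T : ℕ → ℕ → ℕ} (hT : T ∈ SSet N lam) (a j : ℕ) : T a j ≤ N := by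
  by_cases h : j < lam a
  · exact (hT.1 a j h).2
  · rw [hT.2.2.2 a j (by omega)]; omega

lemma SSet_finite (N : ℕ) (lam : ℕ → ℕ) (R : ℕ)
    (hmono : ∀ ⦃a b : ℕ⦄, a ≤ b → lam b ≤ lam a) (hvan : ∀ a, R ≤ a → lam a = 0) :
    (SSet N lam).Finite := by
  classical
  have hmin : ∀ T ∈ SSet N lam, ∀ a j, min (T a j) N = T a j :=
    fun T hT a j => min_eq_left (val_le hT a j)
  apply Set.Finite.of_finite_image
    (f := fun T => (fun p : Fin R × Fin (lam 0) =>
      (⟨min (T p.1.1 p.2.1) N, by omega⟩ : Fin (N+1))))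
  · exact Set.toFinite _
  · intro T1 h1 T2 h2 heq
    funext a j
    by_cases ha : a < R
    · by_cases hj : j < lam 0
      · have := congrFun heq (⟨a, ha⟩, ⟨j, hj⟩)
        have h3 := congrArg Fin.val this
        simp only at h3
        rw [hmin T1 h1, hmin T2 h2] at h3
        exact h3
      · have hja : lam a ≤ j := le_trans (hmono (Nat.zero_le a)) (by omega)
        rw [h1.2.2.2 a j hja, h2.2.2.2 a j hja]
    · have h0 : lam a = 0 := hvan a (by omega)
      rw [h1.2.2.2 a j (by omega), h2.2.2.2 a j (by omega)]

lemma downward_filter (M : ℕ) (P : ℕ → Prop) [DecidablePred P]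
    (hdc : ∀ j k, j ≤ k → k < M → P k → P j) :
    ∀ {j}, j < M → (P j ↔ j < ((range M).filter P).card) := by
  induction M with
  | zero => intro j h; omega
  | succ M ih =>
    intro j hj
    by_cases hPM : P M
    · have hfull : (range (M+1)).filter P = range (M+1) := by
        apply Finset.filter_true_of_mem
        intro x hx
        rcases Nat.lt_succ_iff_lt_or_eq.mp (mem_range.mp hx) with h | h
        · exact hdc x M (by omega) (by omega) hPM
        · rw [h]; exact hPM
      rw [hfull, card_range]
      constructor
      · intro _; exact hj
      · intro _
        rcases Nat.lt_succ_iff_lt_or_eq.mp hj with h | h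
        · exact hdc j M (by omega) (by omega) hPM
        · rw [h]; exact hPM
    · have hred : (range (M+1)).filter P = (range M).filter P := by
        rw [range_add_one, filter_insert, if_neg hPM]
      rw [hred]
      have hdc' : ∀ j k, j ≤ k → k < M → P k → P j :=
        fun j k h1 h2 h3 => hdc j k h1 (by omega) h3
      by_cases hjM : j < M
      · exact ih hdc' hjM
      · have hjeq : j = M := by omega
        rw [hjeq]
        constructor
        · intro h; exact absurd h hPM
        · intro h
          have hsub : (range M).filter P ⊆ range M := filter_subset _ _
          have := Finset.card_le_card hsub
          rw [card_range] at this
          omega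



lemma schurOnes_eq_ncard (N : ℕ) (lam : ℕ → ℕ) : schurOnes N lam = (SSet N lam).ncard := rfl

def extg (N : ℕ) (g : (a : ℕ) → a ∈ Finset.range N → ℕ) : ℕ → ℕ :=
  fun a => if h : a ∈ Finset.range N then g a h else 0

lemma branching (N : ℕ) (lam : ℕ → ℕ)
    (hmono : ∀ ⦃a b : ℕ⦄, a ≤ b → lam b ≤ lam a)
    (hvan : ∀ a, N + 1 ≤ a → lam a = 0) :
    schurOnes (N+1) lam
      = ∑ g ∈ (Finset.range N).pi (fun a => Finset.Icc (lam (a+1)) (lam a)),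
          schurOnes N (extg N g) := by
  classical
  have hfin : (SSet (N+1) lam).Finite := SSet_finite (N+1) lam (N+1) hmono hvan
  set G := (Finset.range N).pi (fun a => Finset.Icc (lam (a+1)) (lam a)) with hG
  set cnt : (ℕ → ℕ → ℕ) → ℕ → ℕ :=
    fun T a => ((range (lam a)).filter (fun j => T a j ≤ N)).card with hcntdef
  set φ : (ℕ → ℕ → ℕ) → ((a : ℕ) → a ∈ Finset.range N → ℕ) :=
    fun T => fun a _ => cnt T a with hφdef
  have hprefix : ∀ T ∈ SSet (N+1) lam, ∀ a j, j < lam a → (T a j ≤ N ↔ j < cnt T a) := by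
    intro T hT a j hj
    exact downward_filter (lam a) (fun j => T a j ≤ N)
      (fun j k h1 h2 h3 => le_trans (row_mono hT h1 h2) h3) hj
  have hcnt_le : ∀ T a, cnt T a ≤ lam a := by
    intro T a
    have := card_le_card (filter_subset (fun j => T a j ≤ N) (range (lam a)))
    rwa [card_range] at this
  have hcnt_ge : ∀ T ∈ SSet (N+1) lam, ∀ a, lam (a+1) ≤ cnt T a := by
    intro T hT a
    have hsub : range (lam (a+1)) ⊆ (range (lam a)).filter (fun j => T a j ≤ N) := by
      intro j hj
      rw [mem_range] at hj
      rw [mem_filter, mem_range]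
      have hja : j < lam a := lt_of_lt_of_le hj (hmono (Nat.le_succ a))
      refine ⟨hja, ?_⟩
      have h1 : T a j < T (a+1) j := hT.2.2.1 a j hj
      have h2 : T (a+1) j ≤ N+1 := (hT.1 (a+1) j hj).2
      omega
    have := card_le_card hsub
    rwa [card_range] at this
  have hcnt_hi : ∀ T ∈ SSet (N+1) lam, ∀ a, N ≤ a → cnt T a = 0 := by
    intro T hT a ha
    have hempty : (range (lam a)).filter (fun j => T a j ≤ N) = ∅ := by
      apply Finset.eq_empty_of_forall_notMem
      intro j hj
      rw [mem_filter, mem_range] at hj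
      have := entries_ge hT hmono a j hj.1
      omega
    rw [hcntdef]
    simp only [hempty, card_empty]
  have hφG : ∀ T ∈ hfin.toFinset, φ T ∈ G := by
    intro T hTf
    have hT := (Set.Finite.mem_toFinset hfin).mp hTf
    rw [hG, Finset.mem_pi]
    intro a ha
    rw [Finset.mem_Icc]
    exact ⟨hcnt_ge T hT a, hcnt_le T a⟩
  have hcard := Finset.card_eq_sum_card_fiberwise hφG
  rw [schurOnes_eq_ncard, Set.ncard_eq_toFinset_card _ hfin, hcard]
  apply Finset.sum_congr rfl
  intro g hgG
  -- facts about e := extg N g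
  set e := extg N g with he
  have hgIcc : ∀ a (ha : a ∈ Finset.range N), lam (a+1) ≤ g a ha ∧ g a ha ≤ lam a := by
    intro a ha
    have := (Finset.mem_pi.mp (hG ▸ hgG)) a ha
    rwa [Finset.mem_Icc] at this
  have he_lt : ∀ (a : ℕ) (ha : a < N), e a = g a (Finset.mem_range.mpr ha) := by
    intro a ha
    rw [he, extg, dif_pos (Finset.mem_range.mpr ha)]
  have he_van : ∀ a, N ≤ a → e a = 0 := by
    intro a ha
    rw [he, extg, dif_neg (by intro hmem; rw [Finset.mem_range] at hmem; omega)]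
  have he_le : ∀ a, e a ≤ lam a := by
    intro a
    by_cases ha : a < N
    · rw [he_lt a ha]; exact (hgIcc a _).2
    · rw [he_van a (by omega)]; omega
  have he_ge : ∀ a, lam (a+1) ≤ e a := by
    intro a
    by_cases ha : a < N
    · rw [he_lt a ha]; exact (hgIcc a _).1
    · rw [he_van a (by omega), hvan (a+1) (by omega)]
  have he_succ : ∀ a, e (a+1) ≤ e a := fun a => le_trans (he_le (a+1)) (he_ge a)
  have hemono : ∀ ⦃x y : ℕ⦄, x ≤ y → e y ≤ e x := fun x y h =>
    antitone_nat_of_succ_le he_succ h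
  -- the fiber as a set
  set Sg : Set (ℕ → ℕ → ℕ) := {T | T ∈ SSet (N+1) lam ∧ φ T = g} with hSg
  have hfib_coe : ↑(hfin.toFinset.filter (fun T => φ T = g)) = Sg := by
    rw [Finset.coe_filter]
    ext T
    simp only [Set.Finite.mem_toFinset, Set.mem_setOf_eq, hSg]
  have hfib_card : (hfin.toFinset.filter (fun T => φ T = g)).card = Sg.ncard := by
    rw [← hfib_coe, Set.ncard_coe_finset]
  -- counts agree with e on the fiber
  have hcnt_eq : ∀ T, T ∈ Sg → ∀ a, cnt T a = e a := by
    intro T hTSg a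
    obtain ⟨hT, hφg⟩ := hTSg
    by_cases ha : a < N
    · have h1 := congrFun (congrFun hφg a) (Finset.mem_range.mpr ha)
      rw [he_lt a ha]
      exact h1
    · rw [hcnt_hi T hT a (by omega), he_van a (by omega)]
  -- truncation map
  set tr : (ℕ → ℕ → ℕ) → (ℕ → ℕ → ℕ) := fun T a j => if j < e a then T a j else 0 with htr
  have hinj : Set.InjOn tr Sg := by
    intro T1 h1 T2 h2 heq
    funext a j
    by_cases hj1 : j < e a
    · have h := congrFun (congrFun heq a) j
      simp only [htr, if_pos hj1] at h
      exact h
    · by_cases hj2 : j < lam a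
      · have c1 : ¬ (T1 a j ≤ N) := by
          rw [hprefix T1 h1.1 a j hj2, hcnt_eq T1 h1 a]; omega
        have c2 : ¬ (T2 a j ≤ N) := by
          rw [hprefix T2 h2.1 a j hj2, hcnt_eq T2 h2 a]; omega
        have d1 : T1 a j ≤ N+1 := (h1.1.1 a j hj2).2
        have d2 : T2 a j ≤ N+1 := (h2.1.1 a j hj2).2
        omega
      · rw [h1.1.2.2.2 a j (by omega), h2.1.2.2.2 a j (by omega)]
  have himg : tr '' Sg = SSet N e := by
    apply Set.Subset.antisymm
    · rintro T' ⟨T, hTSg, rfl⟩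
      obtain ⟨hT, hφg⟩ := hTSg
      have hpre : ∀ a j, j < e a → T a j ≤ N := by
        intro a j hj
        rw [hprefix T hT a j (lt_of_lt_of_le hj (he_le a)), hcnt_eq T ⟨hT, hφg⟩ a]
        exact hj
      refine ⟨?_, ?_, ?_, ?_⟩
      · intro a j hj
        simp only [htr, if_pos hj]
        exact ⟨(hT.1 a j (lt_of_lt_of_le hj (he_le a))).1, hpre a j hj⟩
      · intro a j hj
        simp only [htr, if_pos hj, if_pos (by omega : j < e a)]
        exact hT.2.1 a j (by exact lt_of_lt_of_le hj (he_le a))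
      · intro a j hj
        have hja : j < e a := lt_of_lt_of_le hj (he_succ a)
        simp only [htr, if_pos hj, if_pos hja]
        exact hT.2.2.1 a j (lt_of_lt_of_le hj (he_le (a+1)))
      · intro a j hj
        simp only [htr, if_neg (by omega : ¬ j < e a)]
    · intro T' hT'
      set Tf : ℕ → ℕ → ℕ :=
        fun a j => if j < e a then T' a j else if j < lam a then N+1 else 0 with hTf
      have hTfS : Tf ∈ SSet (N+1) lam := by
        refine ⟨?_, ?_, ?_, ?_⟩
        · intro a j hj
          by_cases h1 : j < e a
          · simp only [hTf, if_pos h1]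
            have := hT'.1 a j h1
            omega
          · simp only [hTf, if_neg h1, if_pos hj]
            omega
        · intro a j hj
          by_cases h1 : j + 1 < e a
          · simp only [hTf, if_pos h1, if_pos (by omega : j < e a)]
            exact hT'.2.1 a j h1
          · by_cases h2 : j < e a
            · simp only [hTf, if_pos h2, if_neg h1, if_pos hj]
              have := hT'.1 a j h2
              omega
            · simp only [hTf, if_neg h1, if_neg h2, if_pos hj, if_pos (by omega : j < lam a)]
              omega
        · intro a j hj
          by_cases h1 : j < e (a+1)
          · have h2 : j < e a := lt_of_lt_of_le h1 (he_succ a)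
            simp only [hTf, if_pos h1, if_pos h2]
            exact hT'.2.2.1 a j h1
          · have h2 : j < e a := lt_of_lt_of_le hj (he_ge a)
            simp only [hTf, if_pos h2, if_neg h1, if_pos hj]
            have := hT'.1 a j h2
            omega
        · intro a j hj
          simp only [hTf, if_neg (by have := he_le a; omega : ¬ j < e a),
            if_neg (by omega : ¬ j < lam a)]
      have hφTf : φ Tf = g := by
        funext a ha
        have haN : a < N := Finset.mem_range.mp ha
        have hfe : (range (lam a)).filter (fun j => Tf a j ≤ N) = range (e a) := by
          ext j
          rw [mem_filter, mem_range, mem_range]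
          constructor
          · rintro ⟨hj1, hj2⟩
            by_contra hc
            have : Tf a j = N+1 := by
              simp only [hTf, if_neg (by omega : ¬ j < e a), if_pos hj1]
            omega
          · intro hj
            refine ⟨lt_of_lt_of_le hj (he_le a), ?_⟩
            simp only [hTf, if_pos hj]
            exact (hT'.1 a j hj).2
        have : cnt Tf a = e a := by
          rw [hcntdef]
          simp only [hfe, card_range]
        rw [hφdef]
        simp only [this, he_lt a haN]
      refine ⟨Tf, ⟨hTfS, hφTf⟩, ?_⟩
      funext a j
      by_cases hj : j < e a
      · simp only [htr, hTf, if_pos hj]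
      · simp only [htr, if_neg hj]
        exact (hT'.2.2.2 a j (by omega)).symm
  rw [hfib_card, schurOnes_eq_ncard, ← himg, Set.ncard_image_of_injOn hinj]

-- ===== Weyl dimension formula =====

lemma scalar_ineq (X Y : ℤ) (h1 : 1 ≤ X) (h2 : X ≤ Y - 1) :
    (X+1)*(X-1)*((Y-1)*(Y-1)) ≤ X*X*(Y*(Y-2)) := by
  nlinarith [mul_nonneg (by linarith : (0:ℤ) ≤ Y - 1 - X) (by linarith : (0:ℤ) ≤ Y - 1 + X)]

def Pprod (n : ℕ) (lam : ℕ → ℕ) : ℤ :=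
  ∏ p ∈ Spairs n, ((lam p.1 : ℤ) + p.2 - lam p.2 - p.1)

def Dfac (n : ℕ) : ℕ := ∏ b ∈ range n, b.factorial

lemma Dfac_pos (n : ℕ) : 0 < Dfac n :=
  Finset.prod_pos (fun b _ => Nat.factorial_pos b)

lemma weyl : ∀ (N : ℕ) (lam : ℕ → ℕ), (∀ ⦃a b : ℕ⦄, a ≤ b → lam b ≤ lam a) →
    (∀ a, N ≤ a → lam a = 0) →
    (Dfac N : ℤ) * schurOnes N lam = Pprod N lam := by
  intro N
  induction N with
  | zero =>
    intro lam hmono hvan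
    have hS : SSet 0 lam = {fun _ _ => 0} := by
      apply Set.Subset.antisymm
      · intro T hT
        have : T = fun _ _ => 0 := by
          funext a j
          exact hT.2.2.2 a j (by rw [hvan a (Nat.zero_le a)]; omega)
        simp [this]
      · intro T hT
        rw [Set.mem_singleton_iff] at hT
        subst hT
        refine ⟨?_, ?_, ?_, ?_⟩ <;> intro a j hj <;>
          simp_all [hvan a (Nat.zero_le a)]
    have h1 : schurOnes 0 lam = 1 := by
      rw [schurOnes_eq_ncard, hS, Set.ncard_singleton]
    have h2 : Spairs 0 = ∅ := by
      apply Finset.eq_empty_of_forall_notMem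
      intro p hp
      have := mem_Spairs.mp hp
      omega
    rw [h1, Pprod, h2]
    simp [Dfac]
  | succ N ih =>
    intro lam hmono hvan
    rw [branching N lam hmono hvan]
    have hD : Dfac (N+1) = N.factorial * Dfac N := by
      rw [Dfac, Dfac, prod_range_succ, mul_comm]
    -- facts about extg for g in the pi set
    have hext : ∀ g ∈ (Finset.range N).pi (fun a => Finset.Icc (lam (a+1)) (lam a)),
        (∀ ⦃x y : ℕ⦄, x ≤ y → extg N g y ≤ extg N g x) ∧ (∀ a, N ≤ a → extg N g a = 0)
        ∧ (∀ a (ha : a < N), lam (a+1) ≤ g a (Finset.mem_range.mpr ha)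
            ∧ g a (Finset.mem_range.mpr ha) ≤ lam a) := by
      intro g hg
      have hgIcc : ∀ a (ha : a ∈ Finset.range N), lam (a+1) ≤ g a ha ∧ g a ha ≤ lam a := by
        intro a ha
        have := (Finset.mem_pi.mp hg) a ha
        rwa [Finset.mem_Icc] at this
      have he_van : ∀ a, N ≤ a → extg N g a = 0 := by
        intro a ha
        rw [extg, dif_neg (by intro hmem; rw [Finset.mem_range] at hmem; omega)]
      have he_le : ∀ a, extg N g a ≤ lam a := by
        intro a
        by_cases ha : a < N
        · rw [extg, dif_pos (Finset.mem_range.mpr ha)]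
          exact (hgIcc a _).2
        · rw [he_van a (by omega)]; omega
      have he_ge : ∀ a, lam (a+1) ≤ extg N g a := by
        intro a
        by_cases ha : a < N
        · rw [extg, dif_pos (Finset.mem_range.mpr ha)]
          exact (hgIcc a _).1
        · rw [he_van a (by omega), hvan (a+1) (by omega)]
      exact ⟨antitone_nat_of_succ_le (fun a => le_trans (he_le (a+1)) (he_ge a)),
        he_van, fun a ha => hgIcc a (Finset.mem_range.mpr ha)⟩
    -- rewrite each summand by the induction hypothesis
    have hsum : ((Dfac (N+1) : ℤ)) *
        ((∑ g ∈ (Finset.range N).pi (fun a => Finset.Icc (lam (a+1)) (lam a)),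
          schurOnes N (extg N g) : ℕ) : ℤ)
        = (N.factorial : ℤ) *
          ∑ g ∈ (Finset.range N).pi (fun a => Finset.Icc (lam (a+1)) (lam a)),
            Pprod N (extg N g) := by
      rw [hD]
      push_cast
      rw [Finset.mul_sum, Finset.mul_sum]
      apply Finset.sum_congr rfl
      intro g hg
      rw [mul_assoc]
      congr 1
      exact ih (extg N g) (hext g hg).1 (hext g hg).2.1
    rw [hsum]
    -- change variables to apply key_int
    set l : ℕ → ℤ := fun a => (lam a : ℤ) + N - a with hl
    have hldec : ∀ a, a < N → l (a+1) ≤ l a := by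
      intro a _
      simp only [hl]
      have := hmono (show a ≤ a+1 by omega)
      push_cast
      omega
    have hbij : ∑ g ∈ (Finset.range N).pi (fun a => Finset.Icc (lam (a+1)) (lam a)),
          Pprod N (extg N g)
        = ∑ m ∈ Fintype.piFinset (fun a : Fin N => Finset.Ico (l ((a:ℕ)+1)) (l (a:ℕ))),
            ∏ a : Fin N, ∏ b ∈ Ioi a, (m a - m b) := by
      classical
      apply Finset.sum_nbij'
        (i := fun g => fun a : Fin N => (g (a:ℕ) (Finset.mem_range.mpr a.isLt) : ℤ) + N - 1 - a)
        (j := fun m => fun a ha => (m ⟨a, Finset.mem_range.mp ha⟩ - ((N:ℤ) - 1 - a)).toNat)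
      · intro g hg
        rw [Fintype.mem_piFinset]
        intro a
        rw [Finset.mem_Ico]
        have h1 := ((hext g hg).2.2 (a:ℕ) a.isLt).1
        have h2 := ((hext g hg).2.2 (a:ℕ) a.isLt).2
        have ha := a.isLt
        simp only [hl]
        push_cast
        omega
      · intro m hm
        rw [Finset.mem_pi]
        intro a ha
        rw [Finset.mem_Icc]
        have haN := Finset.mem_range.mp ha
        have := (Finset.mem_Ico.mp ((Fintype.mem_piFinset.mp hm) ⟨a, haN⟩))
        simp only [hl] at this
        push_cast at this
        omega
      · intro g hg
        funext a ha
        have haN := Finset.mem_range.mp ha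
        simp only
        rw [show ((g a (Finset.mem_range.mpr haN) : ℤ) + N - 1 - a) - ((N:ℤ) - 1 - a)
          = (g a (Finset.mem_range.mpr haN) : ℤ) by ring]
        exact Int.toNat_natCast _
      · intro m hm
        funext a
        simp only [Fin.eta]
        have h1 := (Finset.mem_Ico.mp ((Fintype.mem_piFinset.mp hm) a)).1
        simp only [hl] at h1
        rw [Int.toNat_of_nonneg (by push_cast at h1 ⊢; omega)]
        ring
      · intro g hg
        rw [Pprod, prod_pairs N (fun x y => ((extg N g x : ℤ) + y - extg N g y - x))]
        apply Finset.prod_congr rfl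
        intro a _
        apply Finset.prod_congr rfl
        intro b hb
        have hab : a < b := Finset.mem_Ioi.mp hb
        simp only [extg, dif_pos (Finset.mem_range.mpr a.isLt),
          dif_pos (Finset.mem_range.mpr b.isLt)]
        push_cast
        ring
    rw [hbij, key_int N l hldec, Pprod]
    apply Finset.prod_congr rfl
    intro p hp
    simp only [hl]
    push_cast
    ring

end SchurAux


set_option maxHeartbeats 2000000 in
theorem schur_ones_monotonicity_r_lt_i (n N i hi r : ℕ)
    (lam hatlam mu hatmu : ℕ → ℕ)
    (hlam : isPartition lam) (hhatlam : isPartition hatlam)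
    (hmu : isPartition mu) (hhatmu : isPartition hatmu)
    (hslam : psize lam = n) (hshatlam : psize hatlam = n)
    (hsmu : psize mu = n - 1) (hshatmu : psize hatmu = n - 1)
    (hmove : moveBox lam hatlam i hi) (hmovemu : moveBox mu hatmu i hi)
    (hihi : i < hi)
    (hadd : lam = Function.update mu r (mu r + 1))
    (haddhat : hatlam = Function.update hatmu r (hatmu r + 1))
    (hr : r < i)
    (hN : ∀ a, N ≤ a → hatlam a = 0) :
    schurOnes N hatlam * schurOnes N mu ≤ schurOnes N lam * schurOnes N hatmu := by
  classical
  have hiN : hi < N := by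
    by_contra hcon
    have h0 := hN hi (by omega)
    have h1 := hmove.2.1
    omega
  have hiN2 : i < N := by omega
  have lam_eq_hat : ∀ a, a ≠ i → a ≠ hi → lam a = hatlam a := hmove.2.2
  have mu_eq_hat : ∀ a, a ≠ i → a ≠ hi → mu a = hatmu a := hmovemu.2.2
  have hlam_mu : ∀ a, a ≠ r → lam a = mu a := by
    intro a ha
    rw [hadd, Function.update_of_ne ha]
  have hlam_mu_r : lam r = mu r + 1 := by rw [hadd, Function.update_self]
  have hhat_mu : ∀ a, a ≠ r → hatlam a = hatmu a := by
    intro a ha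
    rw [haddhat, Function.update_of_ne ha]
  have hhat_mu_r : hatlam r = hatmu r + 1 := by rw [haddhat, Function.update_self]
  have hvan_lam : ∀ a, N ≤ a → lam a = 0 := by
    intro a ha
    rw [lam_eq_hat a (by omega) (by omega)]
    exact hN a ha
  have hvan_mu : ∀ a, N ≤ a → mu a = 0 := by
    intro a ha
    rw [← hlam_mu a (by omega)]
    exact hvan_lam a ha
  have hvan_hatmu : ∀ a, N ≤ a → hatmu a = 0 := by
    intro a ha
    rw [← hhat_mu a (by omega)]
    exact hN a ha
  have w_lam := SchurAux.weyl N lam hlam.1 hvan_lam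
  have w_hat := SchurAux.weyl N hatlam hhatlam.1 hN
  have w_mu := SchurAux.weyl N mu hmu.1 hvan_mu
  have w_hatmu := SchurAux.weyl N hatmu hhatmu.1 hvan_hatmu
  set F : (ℕ → ℕ) → ℕ × ℕ → ℤ := fun nu p => (nu p.1 : ℤ) + p.2 - nu p.2 - p.1 with hF
  have hPdef : ∀ nu, SchurAux.Pprod N nu = ∏ p ∈ SchurAux.Spairs N, F nu p := fun nu => rfl
  set q₁ : ℕ × ℕ := (r, i) with hq₁def
  set q₂ : ℕ × ℕ := (r, hi) with hq₂def
  have hq₁ : q₁ ∈ SchurAux.Spairs N := SchurAux.mem_Spairs.mpr ⟨hr, hiN2⟩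
  have hq₂mem : q₂ ∈ (SchurAux.Spairs N).erase q₁ := by
    rw [Finset.mem_erase, hq₂def, hq₁def]
    constructor
    · intro h
      rw [Prod.mk.injEq] at h
      omega
    · exact SchurAux.mem_Spairs.mpr ⟨by omega, hiN⟩
  have hsplit : ∀ nu1 nu2 : ℕ → ℕ,
      SchurAux.Pprod N nu1 * SchurAux.Pprod N nu2
        = (F nu1 q₁ * F nu2 q₁) * ((F nu1 q₂ * F nu2 q₂) *
            ∏ p ∈ ((SchurAux.Spairs N).erase q₁).erase q₂, (F nu1 p * F nu2 p)) := by
    intro nu1 nu2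
    rw [hPdef, hPdef, ← Finset.prod_mul_distrib,
      ← Finset.mul_prod_erase _ _ hq₁, ← Finset.mul_prod_erase _ _ hq₂mem]
  have hrest : ∀ p ∈ ((SchurAux.Spairs N).erase q₁).erase q₂,
      F hatlam p * F mu p = F lam p * F hatmu p := by
    intro p hp
    obtain ⟨hpq₂, hp1⟩ := Finset.mem_erase.mp hp
    obtain ⟨hpq₁, hpS⟩ := Finset.mem_erase.mp hp1
    obtain ⟨hp12, hp2N⟩ := SchurAux.mem_Spairs.mp hpS
    have hne1 : ¬(p.1 = r ∧ p.2 = i) := by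
      intro h
      exact hpq₁ (by rw [hq₁def, Prod.ext_iff]; exact ⟨h.1, h.2⟩)
    have hne2 : ¬(p.1 = r ∧ p.2 = hi) := by
      intro h
      exact hpq₂ (by rw [hq₂def, Prod.ext_iff]; exact ⟨h.1, h.2⟩)
    by_cases hc : p.1 = r ∨ p.2 = r
    · have hfour : p.1 ≠ i ∧ p.1 ≠ hi ∧ p.2 ≠ i ∧ p.2 ≠ hi := by omega
      have e1 : lam p.1 = hatlam p.1 := lam_eq_hat _ hfour.1 hfour.2.1
      have e2 : lam p.2 = hatlam p.2 := lam_eq_hat _ hfour.2.2.1 hfour.2.2.2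
      have e3 : mu p.1 = hatmu p.1 := mu_eq_hat _ hfour.1 hfour.2.1
      have e4 : mu p.2 = hatmu p.2 := mu_eq_hat _ hfour.2.2.1 hfour.2.2.2
      simp only [hF]
      rw [e1, e2, e3, e4]
    · push_neg at hc
      have e1 : lam p.1 = mu p.1 := hlam_mu _ hc.1
      have e2 : lam p.2 = mu p.2 := hlam_mu _ hc.2
      have e3 : hatlam p.1 = hatmu p.1 := hhat_mu _ hc.1
      have e4 : hatlam p.2 = hatmu p.2 := hhat_mu _ hc.2
      simp only [hF]
      rw [e1, e2, e3, e4]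
      ring
  have hrest_nonneg :
      (0:ℤ) ≤ ∏ p ∈ ((SchurAux.Spairs N).erase q₁).erase q₂, (F lam p * F hatmu p) := by
    apply Finset.prod_nonneg
    intro p hp
    have hpS : p ∈ SchurAux.Spairs N :=
      Finset.mem_of_mem_erase (Finset.mem_of_mem_erase hp)
    obtain ⟨hp12, _⟩ := SchurAux.mem_Spairs.mp hpS
    have h1 : lam p.2 ≤ lam p.1 := hlam.1 (le_of_lt hp12)
    have h2 : hatmu p.2 ≤ hatmu p.1 := hhatmu.1 (le_of_lt hp12)
    have g1 : (0:ℤ) ≤ F lam p := by simp only [hF]; push_cast; omega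
    have g2 : (0:ℤ) ≤ F hatmu p := by simp only [hF]; push_cast; omega
    exact mul_nonneg g1 g2
  -- corner values
  set X : ℤ := (lam r : ℤ) + i - lam i - r with hX
  set Y : ℤ := (lam r : ℤ) + hi - lam hi - r with hY
  have chat_r : (hatlam r : ℤ) = (lam r : ℤ) := by
    rw [lam_eq_hat r (by omega) (by omega)]
  have chat_i : (hatlam i : ℤ) = (lam i : ℤ) - 1 := by
    have := hmove.1; push_cast; omega
  have chat_hi : (hatlam hi : ℤ) = (lam hi : ℤ) + 1 := by
    have := hmove.2.1; push_cast; omega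
  have cmu_r : (mu r : ℤ) = (lam r : ℤ) - 1 := by
    have := hlam_mu_r; push_cast; omega
  have cmu_i : (mu i : ℤ) = (lam i : ℤ) := by
    rw [hlam_mu i (by omega)]
  have cmu_hi : (mu hi : ℤ) = (lam hi : ℤ) := by
    rw [hlam_mu hi (by omega)]
  have chm_r : (hatmu r : ℤ) = (lam r : ℤ) - 1 := by
    have := hhat_mu_r; push_cast; omega
  have chm_i : (hatmu i : ℤ) = (lam i : ℤ) - 1 := by
    rw [← hhat_mu i (by omega)]; exact chat_i
  have chm_hi : (hatmu hi : ℤ) = (lam hi : ℤ) + 1 := by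
    rw [← hhat_mu hi (by omega)]; exact chat_hi
  have v1 : F lam q₁ = X := rfl
  have v2 : F hatlam q₁ = X + 1 := by
    simp only [hF, hq₁def, hX]; rw [chat_r, chat_i]; ring
  have v3 : F mu q₁ = X - 1 := by
    simp only [hF, hq₁def, hX]; rw [cmu_r, cmu_i]; ring
  have v4 : F hatmu q₁ = X := by
    simp only [hF, hq₁def, hX]; rw [chm_r, chm_i]; ring
  have v5 : F lam q₂ = Y := rfl
  have v6 : F hatlam q₂ = Y - 1 := by
    simp only [hF, hq₂def, hY]; rw [chat_r, chat_hi]; ring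
  have v7 : F mu q₂ = Y - 1 := by
    simp only [hF, hq₂def, hY]; rw [cmu_r, cmu_hi]; ring
  have v8 : F hatmu q₂ = Y - 2 := by
    simp only [hF, hq₂def, hY]; rw [chm_r, chm_hi]; ring
  have hX1 : 1 ≤ X := by
    have := hlam.1 (le_of_lt hr)
    simp only [hX]; push_cast; omega
  have hXY : X ≤ Y - 1 := by
    have := hlam.1 (le_of_lt hihi)
    simp only [hX, hY]; push_cast; omega
  have hscalar : (X+1)*(X-1)*((Y-1)*(Y-1)) ≤ X*X*(Y*(Y-2)) := SchurAux.scalar_ineq X Y hX1 hXY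
  have hPP : SchurAux.Pprod N hatlam * SchurAux.Pprod N mu
      ≤ SchurAux.Pprod N lam * SchurAux.Pprod N hatmu := by
    rw [hsplit hatlam mu, hsplit lam hatmu, Finset.prod_congr rfl hrest,
      v1, v2, v3, v4, v5, v6, v7, v8]
    set R := ∏ p ∈ ((SchurAux.Spairs N).erase q₁).erase q₂, (F lam p * F hatmu p) with hR
    calc (X+1)*(X-1)*((Y-1)*(Y-1)*R) = ((X+1)*(X-1)*((Y-1)*(Y-1)))*R := by ring
    _ ≤ (X*X*(Y*(Y-2)))*R := mul_le_mul_of_nonneg_right hscalar hrest_nonneg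
    _ = X*X*(Y*(Y-2)*R) := by ring
  have hD2 : (0:ℤ) < (SchurAux.Dfac N : ℤ) * (SchurAux.Dfac N : ℤ) := by
    have := SchurAux.Dfac_pos N
    positivity
  have e1 : ((SchurAux.Dfac N : ℤ) * (SchurAux.Dfac N : ℤ))
      * ((schurOnes N hatlam * schurOnes N mu : ℕ) : ℤ)
      = SchurAux.Pprod N hatlam * SchurAux.Pprod N mu := by
    rw [← w_hat, ← w_mu]; push_cast; ring
  have e2 : ((SchurAux.Dfac N : ℤ) * (SchurAux.Dfac N : ℤ))
      * ((schurOnes N lam * schurOnes N hatmu : ℕ) : ℤ)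
      = SchurAux.Pprod N lam * SchurAux.Pprod N hatmu := by
    rw [← w_lam, ← w_hatmu]; push_cast; ring
  have hAB : ((SchurAux.Dfac N : ℤ) * (SchurAux.Dfac N : ℤ))
      * ((schurOnes N hatlam * schurOnes N mu : ℕ) : ℤ)
      ≤ ((SchurAux.Dfac N : ℤ) * (SchurAux.Dfac N : ℤ))
      * ((schurOnes N lam * schurOnes N hatmu : ℕ) : ℤ) := by
    rw [e1, e2]; exact hPP
  have hfin := (mul_le_mul_iff_right₀ hD2).mp hAB
  exact_mod_cast hfin
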